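/- For fixed t > 0 and λ > 0, the unique solution p(λ; t, σ) of the stationarity equation is strictly increasing in the noise power σ: if 0 < σ₁ < σ₂ then p(λ; t, σ₁) < p(λ; t, σ₂). -/

import Mathlib

open BigOperators

/-- `p` solves the stationarity equation
`(t/(2σ)) · ((1/2)·ln(1 + p/σ) − t)^{−2} · (1 + p/σ)^{−1} = λ` on the domain
`p > σ(e^{2t} − 1)`; this characterizes the unique solution `p(λ; t, σ)`. -/
def IsStatSol (t σ lam p : ℝ) : Prop :=
  σ * (Real.exp (2 * t) - 1) < p ∧
    t / (2 * σ) / ((1 / 2) * Real.log (1 + p / σ) - t) ^ 2 / (1 + p / σ) = lam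

private lemma hfun_deriv (t : ℝ) (ht : 0 < t) {u : ℝ} (hu : Real.exp (2 * t) < u) :
    HasDerivAt (fun u : ℝ => (Real.log u / 2 - t) ^ 2 * u / (u - 1))
      (((2 * (Real.log u / 2 - t) ^ 1 * (u⁻¹ / 2) * u + (Real.log u / 2 - t) ^ 2 * 1) * (u - 1)
        - (Real.log u / 2 - t) ^ 2 * u * 1) / (u - 1) ^ 2) u := by
  have hu1 : 1 < u := lt_trans (by nlinarith [Real.add_one_lt_exp (by positivity : (2:ℝ) * t ≠ 0)]) hu
  have hu0 : (0:ℝ) < u := lt_trans one_pos hu1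
  have hlog : HasDerivAt Real.log u⁻¹ u := Real.hasDerivAt_log (ne_of_gt hu0)
  have hA : HasDerivAt (fun u : ℝ => Real.log u / 2 - t) (u⁻¹ / 2) u :=
    (hlog.div_const 2).sub_const t
  have hA2 := hA.pow 2
  have hnum := hA2.mul (hasDerivAt_id u)
  have hden : HasDerivAt (fun u : ℝ => u - 1) 1 u := (hasDerivAt_id u).sub_const 1
  exact hnum.div hden (by linarith)

private lemma hfun_mono (t : ℝ) (ht : 0 < t) :
    StrictMonoOn (fun u : ℝ => (Real.log u / 2 - t) ^ 2 * u / (u - 1))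
      (Set.Ioi (Real.exp (2 * t))) := by
  apply strictMonoOn_of_deriv_pos (convex_Ioi _)
  · intro u hu
    exact (hfun_deriv t ht hu).differentiableAt.continuousAt.continuousWithinAt
  · intro u hu
    rw [interior_Ioi] at hu
    have hu' : Real.exp (2 * t) < u := hu
    have hu1 : 1 < u := lt_trans (by nlinarith [Real.add_one_lt_exp (by positivity : (2:ℝ) * t ≠ 0)]) hu'
    have hu0 : (0:ℝ) < u := lt_trans one_pos hu1
    rw [(hfun_deriv t ht hu').deriv]
    have hA : 0 < Real.log u / 2 - t := by
      have : 2 * t < Real.log u := (Real.lt_log_iff_exp_lt hu0).2 hu'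
      linarith
    have hlt : Real.log u < u - 1 := Real.log_lt_sub_one_of_pos hu0 (ne_of_gt hu1)
    have hinv : u⁻¹ * u = 1 := inv_mul_cancel₀ (ne_of_gt hu0)
    apply div_pos _ (pow_pos (by linarith) 2)
    have hAlt : Real.log u / 2 - t < u - 1 := by nlinarith [Real.log_pos hu1]
    nlinarith [sq_nonneg (Real.log u / 2 - t), mul_pos hA (sub_pos.2 hAlt)]

set_option maxHeartbeats 1000000 in
/-- For fixed `t > 0` and `λ > 0`, the unique solution `p(λ; t, σ)` of
the stationarity equation is strictly increasing in the noise power `σ`: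
if `0 < σ₁ < σ₂` then `p(λ; t, σ₁) < p(λ; t, σ₂)`. -/
theorem statSol_strictMono_in_noise (t lam σ₁ σ₂ p₁ p₂ : ℝ)
    (ht : 0 < t) (hlam : 0 < lam) (hσ₁ : 0 < σ₁) (hσ : σ₁ < σ₂)
    (h₁ : IsStatSol t σ₁ lam p₁) (h₂ : IsStatSol t σ₂ lam p₂) :
    p₁ < p₂ := by
  obtain ⟨hd₁, he₁⟩ := h₁
  obtain ⟨hd₂, he₂⟩ := h₂
  have hσ₂ : 0 < σ₂ := lt_trans hσ₁ hσ
  set u₁ : ℝ := 1 + p₁ / σ₁ with hu₁def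
  set u₂ : ℝ := 1 + p₂ / σ₂ with hu₂def
  clear_value u₁ u₂
  have hexp1 : (1:ℝ) < Real.exp (2 * t) := by
    nlinarith [Real.add_one_lt_exp (by positivity : (2:ℝ) * t ≠ 0)]
  have hU₁ : Real.exp (2 * t) < u₁ := by
    rw [hu₁def]
    have : Real.exp (2 * t) - 1 < p₁ / σ₁ := by
      rw [lt_div_iff₀ hσ₁]; nlinarith
    linarith
  have hU₂ : Real.exp (2 * t) < u₂ := by
    rw [hu₂def]
    have : Real.exp (2 * t) - 1 < p₂ / σ₂ := by
      rw [lt_div_iff₀ hσ₂]; nlinarith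
    linarith
  have hu₁1 : 1 < u₁ := lt_trans hexp1 hU₁
  have hu₂1 : 1 < u₂ := lt_trans hexp1 hU₂
  have hu₁0 : (0:ℝ) < u₁ := lt_trans one_pos hu₁1
  have hu₂0 : (0:ℝ) < u₂ := lt_trans one_pos hu₂1
  set A₁ : ℝ := Real.log u₁ / 2 - t with hA₁def
  set A₂ : ℝ := Real.log u₂ / 2 - t with hA₂def
  clear_value A₁ A₂
  have hA₁ : 0 < A₁ := by
    have : 2 * t < Real.log u₁ := (Real.lt_log_iff_exp_lt hu₁0).2 hU₁
    rw [hA₁def]; linarith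
  have hA₂ : 0 < A₂ := by
    have : 2 * t < Real.log u₂ := (Real.lt_log_iff_exp_lt hu₂0).2 hU₂
    rw [hA₂def]; linarith
  -- rewrite the stationarity equations
  have heq₁ : t = 2 * lam * σ₁ * A₁ ^ 2 * u₁ := by
    have h' : t / (2 * σ₁) / ((1 / 2) * Real.log u₁ - t) ^ 2 / u₁ = lam := he₁
    have hAeq : (1 / 2) * Real.log u₁ - t = A₁ := by rw [hA₁def]; ring
    rw [hAeq] at h'
    field_simp at h'
    linarith
  have heq₂ : t = 2 * lam * σ₂ * A₂ ^ 2 * u₂ := by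
    have h' : t / (2 * σ₂) / ((1 / 2) * Real.log u₂ - t) ^ 2 / u₂ = lam := he₂
    have hAeq : (1 / 2) * Real.log u₂ - t = A₂ := by rw [hA₂def]; ring
    rw [hAeq] at h'
    field_simp at h'
    linarith
  have hE : σ₁ * (A₁ ^ 2 * u₁) = σ₂ * (A₂ ^ 2 * u₂) := by nlinarith
  -- u₂ < u₁
  have hu21 : u₂ < u₁ := by
    by_contra hcon
    push_neg at hcon
    have hAle : A₁ ≤ A₂ := by
      have := Real.log_le_log hu₁0 hcon
      rw [hA₁def, hA₂def]; linarith
    have hsq : A₁ ^ 2 ≤ A₂ ^ 2 := by nlinarith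
    have hg : A₁ ^ 2 * u₁ ≤ A₂ ^ 2 * u₂ :=
      mul_le_mul hsq hcon hu₁0.le (by positivity)
    have hX : 0 < A₁ ^ 2 * u₁ := by positivity
    nlinarith [mul_lt_mul_of_pos_right hσ hX]
  -- h(u₂) < h(u₁)
  have hh := hfun_mono t ht (Set.mem_Ioi.2 hU₂) (Set.mem_Ioi.2 hU₁) hu21
  simp only at hh
  rw [← hA₁def, ← hA₂def] at hh
  have hh' : A₂ ^ 2 * u₂ * (u₁ - 1) < A₁ ^ 2 * u₁ * (u₂ - 1) := by
    rw [div_lt_div_iff₀ (by linarith) (by linarith)] at hh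
    nlinarith [hh]
  -- p_i = σ_i (u_i - 1)
  have hp₁ : p₁ = σ₁ * (u₁ - 1) := by
    rw [hu₁def]; field_simp; ring
  have hp₂ : p₂ = σ₂ * (u₂ - 1) := by
    rw [hu₂def]; field_simp; ring
  rw [hp₁, hp₂]
  -- from hE and hh' conclude
  have hg₁ : 0 < A₁ ^ 2 * u₁ := by positivity
  have key : σ₁ * (A₁ ^ 2 * u₁) * (u₁ - 1) * (A₁ ^ 2 * u₁) < σ₂ * (u₂ - 1) * (A₁ ^ 2 * u₁) * (A₁ ^ 2 * u₁) := by
    calc σ₁ * (A₁ ^ 2 * u₁) * (u₁ - 1) * (A₁ ^ 2 * u₁)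
        = σ₂ * (A₂ ^ 2 * u₂) * (u₁ - 1) * (A₁ ^ 2 * u₁) := by rw [hE]
      _ < σ₂ * (A₁ ^ 2 * u₁) * (u₂ - 1) * (A₁ ^ 2 * u₁) := by
          nlinarith [mul_lt_mul_of_pos_right hh' (mul_pos hσ₂ hg₁)]
      _ = σ₂ * (u₂ - 1) * (A₁ ^ 2 * u₁) * (A₁ ^ 2 * u₁) := by ring
  have := mul_lt_mul_iff_of_pos_right (mul_pos hg₁ hg₁) |>.1 (by nlinarith [key] : σ₁ * (u₁ - 1) * (A₁ ^ 2 * u₁ * (A₁ ^ 2 * u₁)) < σ₂ * (u₂ - 1) * (A₁ ^ 2 * u₁ * (A₁ ^ 2 * u₁)))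
  exact this
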